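/- Let g be differentiable with L-Lipschitz gradient and let (x_n), (y_n) satisfy y_n = x_n + (βn/(n+α))(x_n - x_{n-1}) and x_{n+1} = y_n - s∇g(y_n) with β ∈ (0,1), α > 0, 0 < s < 2/L. Then for every n, g(x_n) - g(y_n) ≤ (1/(2s(2 - sL)))‖x_{n+1} - x_n‖². -/

import Mathlib

open Filter Topology RealInnerProductSpace

lemma descent_lemma {m : ℕ} (g : EuclideanSpace ℝ (Fin m) → ℝ) (L : ℝ)
    (hdiff : Differentiable ℝ g)
    (hlip : ∀ u v, ‖gradient g u - gradient g v‖ ≤ L * ‖u - v‖)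
    (hL : 0 ≤ L) (a b : EuclideanSpace ℝ (Fin m)) :
    g b ≤ g a + ⟪gradient g a, b - a⟫ + L / 2 * ‖b - a‖ ^ 2 := by
  set v := b - a with hv
  set ℓ : ℝ → EuclideanSpace ℝ (Fin m) := fun t => a + t • v with hℓdef
  have hℓ : ∀ t : ℝ, HasDerivAt ℓ v t := fun t => by
    simpa [hℓdef] using ((hasDerivAt_id t).smul_const v).const_add a
  have hφ : ∀ t : ℝ, HasDerivAt (fun t => g (ℓ t)) (⟪gradient g (ℓ t), v⟫) t := by
    intro t
    have h1 : HasGradientAt g (gradient g (ℓ t)) (ℓ t) := (hdiff (ℓ t)).hasGradientAt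
    have h2 : HasFDerivAt g (InnerProductSpace.toDual ℝ _ (gradient g (ℓ t))) (ℓ t) := h1
    have := h2.comp_hasDerivAt t (hℓ t)
    exact this.congr_deriv (by simp [InnerProductSpace.toDual_apply_apply])
  have hgc : Continuous (gradient g) := by
    have : LipschitzWith L.toNNReal (gradient g) :=
      LipschitzWith.of_dist_le_mul fun u w => by
        rw [dist_eq_norm, dist_eq_norm, Real.coe_toNNReal L hL]
        exact hlip u w
    exact this.continuous
  have hℓc : Continuous ℓ := by fun_prop
  have hcont : Continuous fun t : ℝ => ⟪gradient g (ℓ t), v⟫ :=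
    (hgc.comp hℓc).inner continuous_const
  have hkey : g b - g a = ∫ t in (0:ℝ)..1, ⟪gradient g (ℓ t), v⟫ := by
    have h := intervalIntegral.integral_eq_sub_of_hasDerivAt
      (f := fun t => g (ℓ t)) (fun t _ => hφ t) (hcont.intervalIntegrable 0 1)
    have h0 : ℓ 0 = a := by simp [hℓdef]
    have h1 : ℓ 1 = b := by simp [hℓdef, hv]
    simpa [h0, h1] using h.symm
  have hbound : ∀ t ∈ Set.Icc (0:ℝ) 1,
      ⟪gradient g (ℓ t), v⟫ ≤ ⟪gradient g a, v⟫ + L * ‖v‖ ^ 2 * t := by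
    intro t ht
    have h1 : ⟪gradient g (ℓ t), v⟫ - ⟪gradient g a, v⟫
        = ⟪gradient g (ℓ t) - gradient g a, v⟫ := by
      rw [inner_sub_left]
    have h2 : ⟪gradient g (ℓ t) - gradient g a, v⟫
        ≤ ‖gradient g (ℓ t) - gradient g a‖ * ‖v‖ := real_inner_le_norm _ _
    have h3 : ‖gradient g (ℓ t) - gradient g a‖ ≤ L * (t * ‖v‖) := by
      have := hlip (ℓ t) a
      have he : ℓ t - a = t • v := by simp [hℓdef]
      rw [he, norm_smul, Real.norm_eq_abs, abs_of_nonneg ht.1] at this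
      exact this
    nlinarith [norm_nonneg v, mul_le_mul_of_nonneg_right h3 (norm_nonneg v)]
  have hint : (∫ t in (0:ℝ)..1, ⟪gradient g (ℓ t), v⟫)
      ≤ ∫ t in (0:ℝ)..1, (⟪gradient g a, v⟫ + L * ‖v‖ ^ 2 * t) := by
    apply intervalIntegral.integral_mono_on (by norm_num)
      (hcont.intervalIntegrable 0 1)
      ((by fun_prop : Continuous fun t : ℝ => ⟪gradient g a, v⟫ + L * ‖v‖ ^ 2 * t).intervalIntegrable 0 1)
      hbound
  have hval : (∫ t in (0:ℝ)..1, (⟪gradient g a, v⟫ + L * ‖v‖ ^ 2 * t))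
      = ⟪gradient g a, v⟫ + L / 2 * ‖v‖ ^ 2 := by
    rw [intervalIntegral.integral_add ((by fun_prop : Continuous fun _ : ℝ => ⟪gradient g a, v⟫).intervalIntegrable 0 1)
      ((by fun_prop : Continuous fun t : ℝ => L * ‖v‖ ^ 2 * t).intervalIntegrable 0 1),
      intervalIntegral.integral_const, intervalIntegral.integral_const_mul, integral_id]
    norm_num; ring
  rw [hval] at hint
  linarith [hkey, hint]

theorem value_gap_bound {m : ℕ} (g : EuclideanSpace ℝ (Fin m) → ℝ) (L : ℝ)
    (hdiff : Differentiable ℝ g)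
    (hlip : ∀ u v, ‖gradient g u - gradient g v‖ ≤ L * ‖u - v‖)
    (β α s : ℝ) (hβ₁ : 0 < β) (hβ₂ : β < 1) (hα : 0 < α)
    (hL : 0 < L) (hs₁ : 0 < s) (hs₂ : s < 2 / L)
    (x y : ℕ → EuclideanSpace ℝ (Fin m))
    (hy : ∀ n : ℕ, y n = x (n + 1) + ((β * n) / ((n : ℝ) + α)) • (x (n + 1) - x n))
    (hstep : ∀ n : ℕ, x (n + 2) = y n - s • gradient g (y n)) :
    ∀ n : ℕ, g (x (n + 1)) - g (y n) ≤
      1 / (2 * s * (2 - s * L)) * ‖x (n + 2) - x (n + 1)‖ ^ 2 := by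
  intro n
  have hsL : s * L < 2 := by
    have := (lt_div_iff₀ hL).mp hs₂; linarith
  have hc : 0 < 2 - s * L := by linarith
  set p := y n with hp
  set u : EuclideanSpace ℝ (Fin m) := p - x (n + 1) with hu
  set v : EuclideanSpace ℝ (Fin m) := x (n + 2) - x (n + 1) with hvdef
  have hdesc := descent_lemma g L hdiff hlip hL.le p (x (n + 1))
  -- s • gradient g p = p - x (n+2)
  have hsg : s • gradient g p = p - x (n + 2) := by
    rw [hstep n]; abel
  have hIP : s * ⟪gradient g p, x (n + 1) - p⟫ = ⟪v, u⟫ - ‖u‖ ^ 2 := by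
    have h1 : ⟪s • gradient g p, x (n + 1) - p⟫ = s * ⟪gradient g p, x (n + 1) - p⟫ :=
      real_inner_smul_left _ _ _
    rw [← h1, hsg]
    have he : p - x (n + 2) = u - v := by rw [hu, hvdef]; abel
    have he2 : x (n + 1) - p = -u := by rw [hu]; abel
    rw [he, he2, inner_neg_right, inner_sub_left, real_inner_self_eq_norm_sq,
      real_inner_comm u v]
    ring
  have hnu : ‖x (n + 1) - p‖ = ‖u‖ := by
    rw [hu, ← norm_neg]; congr 1; abel
  -- key AM-GM inequality
  have hamgm : 2 * (2 - s * L) * ⟪v, u⟫ ≤ (2 - s * L) ^ 2 * ‖u‖ ^ 2 + ‖v‖ ^ 2 := by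
    have h0 : (0:ℝ) ≤ ‖(2 - s * L) • u - v‖ ^ 2 := sq_nonneg _
    rw [norm_sub_sq_real, norm_smul, real_inner_smul_left, Real.norm_eq_abs,
      abs_of_pos hc] at h0
    have := real_inner_comm u v
    nlinarith
  have hpos : 0 < 2 * s * (2 - s * L) := by positivity
  rw [one_div, ← div_eq_inv_mul, le_div_iff₀ hpos]
  rw [hnu] at hdesc
  have hdesc' := mul_le_mul_of_nonneg_left hdesc hs₁.le
  nlinarith [hdesc', hIP, hamgm, sq_nonneg ‖u‖, hs₁, hc]
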